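/- Let X be a graph-like continuum with vertex set V. Every cut E(A,B) induced by a separation (A,B) of V has even cardinality if and only if every vertex of X is even. -/

import Mathlib

open Set Topology Filter Function

universe u

/-- A compact graph-like space structure on a topological space `X`:
a closed zero-dimensional vertex set `V` together with an index type `E`
(carrying the discrete topology) such that `X \ V ≅ E × (0,1)`. -/
structure GraphLike (X : Type u) [TopologicalSpace X] where
  V : Set X
  closedV : IsClosed V
  zeroDimV : TotallyDisconnectedSpace V
  E : Type
  homeo :
    letI : TopologicalSpace E := ⊥
    Nonempty ((Vᶜ : Set X) ≃ₜ (E × ↥(Set.Ioo (0 : ℝ) 1)))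

variable {X : Type u} [TopologicalSpace X]

/-- An edge of a graph-like space: a connected component of `X \ V`. -/
def GraphLike.IsEdge (G : GraphLike X) (e : Set X) : Prop :=
  ∃ x, x ∈ (G.V)ᶜ ∧ e = connectedComponentIn (G.V)ᶜ x

/-- A subset of the vertex set which is clopen in the subspace `V`. -/
def GraphLike.ClopenIn (G : GraphLike X) (C : Set X) : Prop :=
  C ⊆ G.V ∧ IsClosed C ∧ IsClosed (G.V \ C)

/-- A separation of a graph-like space: a partition of the vertex set into
two disjoint clopen pieces. -/
structure GraphLike.Separation (G : GraphLike X) where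
  A : Set X
  B : Set X
  clopenA : G.ClopenIn A
  clopenB : G.ClopenIn B
  disjoint : A ∩ B = ∅
  union : A ∪ B = G.V

/-- The cut induced by a pair of vertex sets: all edges whose closure meets both. -/
def GraphLike.cut (G : GraphLike X) (A B : Set X) : Set (Set X) :=
  {e | G.IsEdge e ∧ (closure e ∩ A).Nonempty ∧ (closure e ∩ B).Nonempty}

/-- A cut is even if it is finite of even cardinality. -/
def GraphLike.EvenCut (G : GraphLike X) (A B : Set X) : Prop :=
  (G.cut A B).Finite ∧ Even (G.cut A B).ncard

/-- A vertex is even if it has a clopen neighbourhood `A` in `V` such that every clopen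
`C` with `v ∈ C ⊆ A` induces an even cut `E(C, V ∖ C)`. -/
def GraphLike.EvenVertex (G : GraphLike X) (v : X) : Prop :=
  ∃ A, G.ClopenIn A ∧ v ∈ A ∧
    ∀ C, G.ClopenIn C → v ∈ C → C ⊆ A →
      (G.cut C (G.V \ C)).Finite ∧ Even (G.cut C (G.V \ C)).ncard

/-- A vertex is odd if it has a clopen neighbourhood `A` in `V` such that every clopen
`C` with `v ∈ C ⊆ A` induces an odd cut `E(C, V ∖ C)`. -/
def GraphLike.OddVertex (G : GraphLike X) (v : X) : Prop :=
  ∃ A, G.ClopenIn A ∧ v ∈ A ∧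
    ∀ C, G.ClopenIn C → v ∈ C → C ⊆ A →
      (G.cut C (G.V \ C)).Finite ∧ Odd (G.cut C (G.V \ C)).ncard

namespace GraphLike

lemma clopenIn_V (G : GraphLike X) : G.ClopenIn G.V :=
  ⟨subset_rfl, G.closedV, by simpa using isClosed_empty⟩

lemma ClopenIn.inter {G : GraphLike X} {C D : Set X} (hC : G.ClopenIn C) (hD : G.ClopenIn D) :
    G.ClopenIn (C ∩ D) := by
  refine ⟨fun x hx => hC.1 hx.1, hC.2.1.inter hD.2.1, ?_⟩
  rw [Set.diff_inter]
  exact hC.2.2.union hD.2.2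

lemma ClopenIn.diff {G : GraphLike X} {C D : Set X} (hC : G.ClopenIn C) (hD : G.ClopenIn D) :
    G.ClopenIn (C \ D) := by
  refine ⟨fun x hx => hC.1 hx.1, ?_, ?_⟩
  · have h : C \ D = C ∩ (G.V \ D) := by
      ext x
      exact ⟨fun hx => ⟨hx.1, hC.1 hx.1, hx.2⟩, fun hx => ⟨hx.1, hx.2.2⟩⟩
    rw [h]; exact hC.2.1.inter hD.2.2
  · have h : G.V \ (C \ D) = (G.V \ C) ∪ D := by
      ext x
      constructor
      · rintro ⟨hxV, hx⟩
        by_cases hxC : x ∈ C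
        · right; by_contra hxD; exact hx ⟨hxC, hxD⟩
        · left; exact ⟨hxV, hxC⟩
      · rintro (⟨hxV, hxC⟩ | hxD)
        · exact ⟨hxV, fun h' => hxC h'.1⟩
        · exact ⟨hD.1 hxD, fun h' => h'.2 hxD⟩
    rw [h]; exact hC.2.2.union hD.2.1

lemma IsEdge.subset_compl {G : GraphLike X} {e : Set X} (he : G.IsEdge e) : e ⊆ (G.V)ᶜ := by
  obtain ⟨x, hx, rfl⟩ := he; exact connectedComponentIn_subset _ _

lemma IsEdge.closure_inter_compl {G : GraphLike X} {e : Set X} (he : G.IsEdge e) :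
    closure e ∩ (G.V)ᶜ = e := by
  obtain ⟨x, hx, rfl⟩ := he
  apply subset_antisymm
  · rintro y ⟨hy, hyV⟩
    rw [connectedComponentIn_eq_image hx] at hy ⊢
    have h2 : (⟨y, hyV⟩ : ((G.V)ᶜ : Set X)) ∈
        closure (connectedComponent (⟨x, hx⟩ : ((G.V)ᶜ : Set X))) := closure_subtype.mpr hy
    rw [isClosed_connectedComponent.closure_eq] at h2
    exact ⟨_, h2, rfl⟩
  · exact subset_inter subset_closure (connectedComponentIn_subset _ _)

/-- Every edge of a graph-like space has at most two endpoints. -/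
lemma IsEdge.ends [CompactSpace X] [TopologicalSpace.MetrizableSpace X] [Nonempty X]
    {G : GraphLike X} {e : Set X} (he : G.IsEdge e) :
    ∃ a b : X, closure e ∩ G.V ⊆ {a, b} := by
  classical
  letI : MetricSpace X := TopologicalSpace.metrizableSpaceMetric X
  obtain ⟨x, hx, hee⟩ := he
  have hedge : G.IsEdge e := ⟨x, hx, hee⟩
  have hcic : closure e ∩ (G.V)ᶜ = e := hedge.closure_inter_compl
  letI : TopologicalSpace G.E := ⊥
  haveI : DiscreteTopology G.E := ⟨rfl⟩
  obtain ⟨h⟩ := G.homeo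
  set I01 := ↥(Set.Ioo (0 : ℝ) 1)
  haveI : PreconnectedSpace I01 := Subtype.preconnectedSpace isPreconnected_Ioo
  set ε : G.E := (h ⟨x, hx⟩).1 with hε
  set f : I01 → X := fun t => ((h.symm (ε, t) : ((G.V)ᶜ : Set X)) : X) with hfdef
  have hf : Continuous f :=
    continuous_subtype_val.comp (h.symm.continuous.comp (Continuous.prodMk_right ε))
  -- `e` is the range of `f`
  have h1 : connectedComponent (h ⟨x, hx⟩) = ({ε} : Set G.E) ×ˢ (univ : Set I01) := by
    apply subset_antisymm
    · rintro ⟨η, t⟩ hq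
      have h2 := Continuous.image_connectedComponent_subset (continuous_fst)
        (h ⟨x, hx⟩) ⟨_, hq, rfl⟩
      rw [connectedComponent_eq_singleton] at h2
      exact ⟨h2, trivial⟩
    · exact (isPreconnected_singleton.prod isPreconnected_univ).subset_connectedComponent
        (Set.mem_prod.mpr ⟨rfl, trivial⟩)
  have h3 := h.symm.image_connectedComponentIn
    (s := (univ : Set (G.E × I01))) (x := h ⟨x, hx⟩) (mem_univ _)
  rw [Set.image_univ, h.symm.surjective.range_eq, connectedComponentIn_univ,
    connectedComponentIn_univ, h.symm_apply_apply] at h3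
  have hrange : e = range f := by
    have h4 : ({ε} : Set G.E) ×ˢ (univ : Set I01) = range (fun t : I01 => (ε, t)) := by
      ext ⟨η, t⟩
      simp [Set.mem_prod, eq_comm, Prod.ext_iff]
    rw [hee, connectedComponentIn_eq_image hx, ← h3, h1, h4, ← Set.range_comp, ← Set.range_comp]
    rfl
  -- end-limit predicate
  set Q : ℝ → X → Prop :=
    fun c y => ∀ n : ℕ, y ∈ closure (f '' {t : I01 | |(t : ℝ) - c| < 1 / (n + 1)}) with hQdef
  -- Claim 1 : every boundary point is an end limit at 0 or at 1
  have claim1 : ∀ y ∈ closure e ∩ G.V, Q 0 y ∨ Q 1 y := by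
    rintro y ⟨hy, hyV⟩
    rw [hrange] at hy
    obtain ⟨u, hu_mem, hu_lim⟩ := mem_closure_iff_seq_limit.mp hy
    choose t ht using hu_mem
    have htIcc : ∀ n, (t n : ℝ) ∈ Set.Icc (0 : ℝ) 1 :=
      fun n => ⟨le_of_lt (t n).2.1, le_of_lt (t n).2.2⟩
    obtain ⟨s, hsIcc, φ, hφ, hφlim⟩ := isCompact_Icc.tendsto_subseq htIcc
    have hfcomp : Tendsto (fun k => f (t (φ k))) atTop (𝓝 y) := by
      have := hu_lim.comp hφ.tendsto_atTop
      simpa only [Function.comp_def, ht] using this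
    by_cases hs : s ∈ Set.Ioo (0 : ℝ) 1
    · exfalso
      have hl1 : Tendsto (fun n => t (φ n)) atTop (𝓝 (⟨s, hs⟩ : I01)) := by
        rw [Topology.IsInducing.subtypeVal.tendsto_nhds_iff]
        exact hφlim
      have hl2 : Tendsto (fun n => f (t (φ n))) atTop (𝓝 (f ⟨s, hs⟩)) :=
        (hf.tendsto _).comp hl1
      have h4 : y = f ⟨s, hs⟩ := tendsto_nhds_unique hfcomp hl2
      have h5 : y ∈ e := by rw [hrange, h4]; exact mem_range_self _
      exact hedge.subset_compl h5 hyV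
    · have key : ∀ c : ℝ, Tendsto (fun k => ((t (φ k)) : ℝ)) atTop (𝓝 c) → Q c y := by
        intro c hc n
        apply mem_closure_of_tendsto hfcomp
        have hev : ∀ᶠ k in atTop, dist ((t (φ k)) : ℝ) c < 1 / (n + 1) :=
          (Metric.tendsto_nhds.mp hc) (1 / (n + 1)) (by positivity)
        filter_upwards [hev] with k hk
        exact mem_image_of_mem f (by simpa [Real.dist_eq] using hk)
      have hs01 : s = 0 ∨ s = 1 := by
        rcases hsIcc with ⟨hs0, hs1⟩
        rcases eq_or_lt_of_le hs0 with h'|h'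
        · exact Or.inl h'.symm
        · rcases eq_or_lt_of_le hs1 with h''|h''
          · exact Or.inr h''
          · exact absurd ⟨h', h''⟩ hs
      rcases hs01 with rfl | rfl
      · exact Or.inl (key 0 hφlim)
      · exact Or.inr (key 1 hφlim)
  -- Claim 2 : for `c ∉ (0,1)` there is at most one end limit at `c`
  have claim2 : ∀ c : ℝ, c ∉ Set.Ioo (0 : ℝ) 1 → ∀ a ∈ closure e ∩ G.V,
      ∀ b ∈ closure e ∩ G.V, Q c a → Q c b → a = b := by
    intro c hc a ha b hb hQa hQb
    by_contra hab
    haveI : CompactSpace ↥G.V := isCompact_iff_compactSpace.mp G.closedV.isCompact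
    haveI : TotallySeparatedSpace ↥G.V := loc_compact_t2_tot_disc_iff_tot_sep.mp G.zeroDimV
    obtain ⟨U, hU, haU, hbU⟩ := exists_isClopen_of_totally_separated
      (show (⟨a, ha.2⟩ : ↥G.V) ≠ ⟨b, hb.2⟩ from fun hcon => hab (congrArg Subtype.val hcon))
    have hWc : IsCompact (Subtype.val '' U : Set X) :=
      (hU.isClosed.isCompact).image continuous_subtype_val
    have hW'c : IsCompact (Subtype.val '' Uᶜ : Set X) :=
      (hU.compl.isClosed.isCompact).image continuous_subtype_val
    have hdisj : Disjoint (Subtype.val '' U : Set X) (Subtype.val '' Uᶜ) :=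
      (Set.disjoint_image_iff Subtype.val_injective).mpr disjoint_compl_right
    obtain ⟨O, O', hO, hO', hWO, hW'O', hOO'⟩ :=
      SeparatedNhds.of_isCompact_isCompact hWc hW'c hdisj
    have haO : a ∈ O := hWO ⟨⟨a, ha.2⟩, haU, rfl⟩
    have hbO' : b ∈ O' := hW'O' ⟨⟨b, hb.2⟩, hbU, rfl⟩
    have hVsub : G.V ⊆ O ∪ O' := by
      intro v hv
      by_cases hvU : (⟨v, hv⟩ : ↥G.V) ∈ U
      · exact Or.inl (hWO ⟨_, hvU, rfl⟩)
      · exact Or.inr (hW'O' ⟨_, hvU, rfl⟩)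
    have hbad : ∀ n : ℕ, ∃ t : I01, |((t : ℝ)) - c| < 1 / (n + 1) ∧ f t ∉ O ∪ O' := by
      intro n
      obtain ⟨y₀, hy₀O, hy₀mem⟩ := _root_.mem_closure_iff.mp (hQa n) O hO haO
      obtain ⟨t₀, ht₀S, rfl⟩ := hy₀mem
      obtain ⟨y₁, hy₁O, hy₁mem⟩ := _root_.mem_closure_iff.mp (hQb n) O' hO' hbO'
      obtain ⟨t₁, ht₁S, rfl⟩ := hy₁mem
      set m := min ((t₀ : ℝ)) ((t₁ : ℝ)) with hm
      set M := max ((t₀ : ℝ)) ((t₁ : ℝ)) with hM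
      have hmM : Set.Icc m M ⊆ Set.Ioo (0 : ℝ) 1 := by
        intro r hr
        exact ⟨lt_of_lt_of_le (lt_min (t₀).2.1 (t₁).2.1) hr.1,
          lt_of_le_of_lt hr.2 (max_lt (t₀).2.2 (t₁).2.2)⟩
      set T : Set I01 := {t : I01 | (t : ℝ) ∈ Set.Icc m M} with hT
      have hTpre : IsPreconnected T := by
        rw [← Topology.IsInducing.subtypeVal.isPreconnected_image]
        have himT : Subtype.val '' T = Set.Icc m M := by
          apply subset_antisymm
          · rintro r ⟨t', ht', rfl⟩; exact ht'
          · intro r hr; exact ⟨⟨r, hmM hr⟩, hr, rfl⟩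
        rw [himT]; exact isPreconnected_Icc
      have himg : IsPreconnected (f '' T) := hTpre.image f hf.continuousOn
      have hsub : ¬ (f '' T ⊆ O ∪ O') := by
        intro hsubset
        obtain ⟨z, hz⟩ := himg O O' hO hO' hsubset
          ⟨f t₀, ⟨t₀, ⟨min_le_left _ _, le_max_left _ _⟩, rfl⟩, hy₀O⟩
          ⟨f t₁, ⟨t₁, ⟨min_le_right _ _, le_max_right _ _⟩, rfl⟩, hy₁O⟩
        exact Set.disjoint_iff.mp hOO' hz.2
      obtain ⟨z, hzT, hzO⟩ := not_subset.mp hsub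
      obtain ⟨tz, htzT, rfl⟩ := hzT
      refine ⟨tz, ?_, hzO⟩
      simp only [Set.mem_setOf_eq] at ht₀S ht₁S
      rw [abs_lt] at ht₀S ht₁S
      rw [abs_lt]
      constructor
      · have hmgt : c - 1 / (n + 1) < m := lt_min (by linarith [ht₀S.1]) (by linarith [ht₁S.1])
        linarith [htzT.1]
      · have hMlt : M < c + 1 / (n + 1) := max_lt (by linarith [ht₀S.2]) (by linarith [ht₁S.2])
        linarith [htzT.2]
    choose tb htb1 htb2 using hbad
    obtain ⟨z, -, φ, hφ, hzlim⟩ := isCompact_univ.tendsto_subseq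
      (fun n => mem_univ (f (tb n)))
    have hzO : z ∈ (O ∪ O')ᶜ := by
      have hclosed : IsClosed ((O ∪ O')ᶜ) := (hO.union hO').isClosed_compl
      exact hclosed.mem_of_tendsto hzlim (Filter.Eventually.of_forall (fun k => htb2 (φ k)))
    have hzcl : z ∈ closure e := by
      apply mem_closure_of_tendsto hzlim
      exact Filter.Eventually.of_forall (fun k => by rw [hrange]; exact mem_range_self (tb (φ k)))
    have hze : z ∉ e := by
      intro hz
      rw [hrange] at hz
      obtain ⟨s', hs'⟩ := hz
      have hlim0 : Tendsto (fun k => ((tb (φ k)) : ℝ)) atTop (𝓝 c) := by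
        rw [Metric.tendsto_atTop]
        intro δ hδ
        obtain ⟨N, hN⟩ := exists_nat_one_div_lt (K := ℝ) hδ
        refine ⟨N, fun k hk => ?_⟩
        have hb1 : |((tb (φ k)) : ℝ) - c| < 1 / (φ k + 1) := htb1 (φ k)
        have hb2 : (1 : ℝ) / (φ k + 1) ≤ 1 / (N + 1) := by
          apply one_div_le_one_div_of_le (by positivity)
          have hkN : (N : ℝ) ≤ (φ k : ℝ) := by
            exact_mod_cast le_trans hk hφ.le_apply
          linarith
        rw [Real.dist_eq]
        linarith
      have hlimsub : Tendsto (fun k => h.symm (ε, tb (φ k))) atTop (𝓝 (h.symm (ε, s'))) := by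
        rw [Topology.IsInducing.subtypeVal.tendsto_nhds_iff]
        have : Subtype.val (h.symm (ε, s')) = z := hs'
        simpa only [Function.comp_def, this] using hzlim
      have hlim2 : Tendsto (fun k => tb (φ k)) atTop (𝓝 s') := by
        have hh := (h.continuous.tendsto _).comp hlimsub
        simp only [Function.comp_def, Homeomorph.apply_symm_apply] at hh
        have := (continuous_snd.tendsto _).comp hh
        simpa [Function.comp_def] using this
      have hlim3 : Tendsto (fun k => ((tb (φ k)) : ℝ)) atTop (𝓝 ((s' : ℝ))) :=
        (continuous_subtype_val.tendsto _).comp hlim2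
      have hcs : (s' : ℝ) = c := tendsto_nhds_unique hlim3 hlim0
      exact hc (hcs ▸ s'.2)
    have hzV : z ∈ G.V := by
      by_contra hzV
      have hmem : z ∈ closure e ∩ (G.V)ᶜ := ⟨hzcl, hzV⟩
      rw [hcic] at hmem
      exact hze hmem
    exact hzO (hVsub hzV)
  -- conclude
  have h0notmem : (0 : ℝ) ∉ Set.Ioo (0 : ℝ) 1 := fun hcc => lt_irrefl _ hcc.1
  have h1notmem : (1 : ℝ) ∉ Set.Ioo (0 : ℝ) 1 := fun hcc => lt_irrefl _ hcc.2
  by_cases h0e : ∃ y ∈ closure e ∩ G.V, Q 0 y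
  · obtain ⟨a, haS, haQ⟩ := h0e
    by_cases h1e : ∃ y ∈ closure e ∩ G.V, Q 1 y
    · obtain ⟨b, hbS, hbQ⟩ := h1e
      refine ⟨a, b, fun y hy => ?_⟩
      simp only [Set.mem_insert_iff, Set.mem_singleton_iff]
      rcases claim1 y hy with hQy | hQy
      · exact Or.inl (claim2 0 h0notmem y hy a haS hQy haQ)
      · exact Or.inr (claim2 1 h1notmem y hy b hbS hQy hbQ)
    · refine ⟨a, a, fun y hy => ?_⟩
      simp only [Set.mem_insert_iff, Set.mem_singleton_iff, or_self]
      rcases claim1 y hy with hQy | hQy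
      · exact claim2 0 h0notmem y hy a haS hQy haQ
      · exact absurd ⟨y, hy, hQy⟩ h1e
  · by_cases h1e : ∃ y ∈ closure e ∩ G.V, Q 1 y
    · obtain ⟨b, hbS, hbQ⟩ := h1e
      refine ⟨b, b, fun y hy => ?_⟩
      simp only [Set.mem_insert_iff, Set.mem_singleton_iff, or_self]
      rcases claim1 y hy with hQy | hQy
      · exact absurd ⟨y, hy, hQy⟩ h0e
      · exact claim2 1 h1notmem y hy b hbS hQy hbQ
    · refine ⟨Classical.arbitrary X, Classical.arbitrary X, fun y hy => ?_⟩
      rcases claim1 y hy with hQy | hQy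
      · exact absurd ⟨y, hy, hQy⟩ h0e
      · exact absurd ⟨y, hy, hQy⟩ h1e

set_option maxHeartbeats 1000000 in
/-- The key parity identity: the cut of a disjoint union of clopen sets is the
symmetric difference of the two cuts. -/
lemma cut_symmDiff [CompactSpace X] [TopologicalSpace.MetrizableSpace X] [Nonempty X]
    (G : GraphLike X) {C₁ C₂ : Set X} (h₁ : C₁ ⊆ G.V) (h₂ : C₂ ⊆ G.V)
    (hd : C₁ ∩ C₂ = ∅) :
    G.cut (C₁ ∪ C₂) (G.V \ (C₁ ∪ C₂)) =
      symmDiff (G.cut C₁ (G.V \ C₁)) (G.cut C₂ (G.V \ C₂)) := by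
  ext e
  rw [Set.mem_symmDiff]
  by_cases hedge : G.IsEdge e
  · obtain ⟨a, b, hK⟩ := hedge.ends
    have hmem : ∀ D : Set X, D ⊆ G.V →
        ((closure e ∩ D).Nonempty ↔
          (a ∈ closure e ∩ G.V ∧ a ∈ D) ∨ (b ∈ closure e ∩ G.V ∧ b ∈ D)) := by
      intro D hD
      constructor
      · rintro ⟨p, hp, hpD⟩
        have hpK : p ∈ closure e ∩ G.V := ⟨hp, hD hpD⟩
        rcases hK hpK with hpa | hpb
        · subst hpa; exact Or.inl ⟨hpK, hpD⟩
        · rw [Set.mem_singleton_iff] at hpb; subst hpb; exact Or.inr ⟨hpK, hpD⟩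
      · rintro (⟨hK', hD'⟩ | ⟨hK', hD'⟩) <;> exact ⟨_, hK'.1, hD'⟩
    have hdV : ∀ y : X, y ∈ C₁ → y ∉ C₂ := by
      intro y hy1 hy2
      have : y ∈ C₁ ∩ C₂ := ⟨hy1, hy2⟩
      rw [hd] at this
      exact this
    have haV : a ∈ closure e ∩ G.V → a ∈ G.V := fun h' => h'.2
    have hbV : b ∈ closure e ∩ G.V → b ∈ G.V := fun h' => h'.2
    simp only [GraphLike.cut, Set.mem_setOf_eq, hedge, true_and]
    rw [hmem _ (union_subset h₁ h₂), hmem _ diff_subset, hmem _ h₁, hmem _ diff_subset,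
      hmem _ h₂, hmem _ diff_subset]
    simp only [Set.mem_union, Set.mem_diff]
    have hda := hdV a
    have hdb := hdV b
    clear hK hmem hdV hd hedge
    by_cases haK : a ∈ closure e ∩ G.V <;> by_cases hbK : b ∈ closure e ∩ G.V <;>
      by_cases ha1 : a ∈ C₁ <;> by_cases ha2 : a ∈ C₂ <;>
      by_cases hb1 : b ∈ C₁ <;> by_cases hb2 : b ∈ C₂ <;>
      simp_all
  · simp only [GraphLike.cut, Set.mem_setOf_eq, hedge, false_and]
    tauto

lemma even_symmDiff_aux {α : Type u} {s t u : Set α} (h : s = symmDiff t u)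
    (ht : t.Finite) (hte : Even t.ncard) (hu : u.Finite) (hue : Even u.ncard) :
    s.Finite ∧ Even s.ncard := by
  subst h
  have hfin : (symmDiff t u).Finite := (ht.union hu).subset Set.symmDiff_subset_union
  refine ⟨hfin, ?_⟩
  have hdisj : Disjoint (symmDiff t u) (t ∩ u) := disjoint_symmDiff_inf t u
  have h1 : (symmDiff t u ∪ t ∩ u).ncard = (symmDiff t u).ncard + (t ∩ u).ncard :=
    Set.ncard_union_eq hdisj hfin (ht.inter_of_left _)
  have h2 : symmDiff t u ∪ t ∩ u = t ∪ u := symmDiff_sup_inf t u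
  have h3 : (t ∪ u).ncard + (t ∩ u).ncard = t.ncard + u.ncard :=
    Set.ncard_union_add_ncard_inter t u ht hu
  rw [h2] at h1
  rw [Nat.even_iff] at hte hue ⊢
  omega

lemma EvenCut.union' [CompactSpace X] [TopologicalSpace.MetrizableSpace X] [Nonempty X]
    {G : GraphLike X} {C₁ C₂ : Set X} (h₁ : C₁ ⊆ G.V) (h₂ : C₂ ⊆ G.V) (hd : C₁ ∩ C₂ = ∅)
    (e₁ : G.EvenCut C₁ (G.V \ C₁)) (e₂ : G.EvenCut C₂ (G.V \ C₂)) :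
    G.EvenCut (C₁ ∪ C₂) (G.V \ (C₁ ∪ C₂)) :=
  even_symmDiff_aux (G.cut_symmDiff h₁ h₂ hd) e₁.1 e₁.2 e₂.1 e₂.2

lemma EvenCut.of_union [CompactSpace X] [TopologicalSpace.MetrizableSpace X] [Nonempty X]
    {G : GraphLike X} {C₁ C₂ : Set X} (h₁ : C₁ ⊆ G.V) (h₂ : C₂ ⊆ G.V) (hd : C₁ ∩ C₂ = ∅)
    (eu : G.EvenCut (C₁ ∪ C₂) (G.V \ (C₁ ∪ C₂))) (e₂ : G.EvenCut C₂ (G.V \ C₂)) :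
    G.EvenCut C₁ (G.V \ C₁) := by
  have hsd := G.cut_symmDiff h₁ h₂ hd
  have hkey : G.cut C₁ (G.V \ C₁) =
      symmDiff (G.cut (C₁ ∪ C₂) (G.V \ (C₁ ∪ C₂))) (G.cut C₂ (G.V \ C₂)) := by
    rw [hsd]
    exact (symmDiff_symmDiff_cancel_right _ _).symm
  exact even_symmDiff_aux hkey eu.1 eu.2 e₂.1 e₂.2

lemma evenCut_of_allVerticesEven [CompactSpace X] [TopologicalSpace.MetrizableSpace X]
    [Nonempty X] (G : GraphLike X) (hv : ∀ v ∈ G.V, G.EvenVertex v) :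
    ∀ C, G.ClopenIn C → G.EvenCut C (G.V \ C) := by
  classical
  have shrink : ∀ v : X, ∃ Nv : Set X, v ∈ G.V → (G.ClopenIn Nv ∧ v ∈ Nv ∧
      ∀ D, G.ClopenIn D → D ⊆ Nv → G.EvenCut D (G.V \ D)) := by
    intro v
    by_cases hvV : v ∈ G.V
    · obtain ⟨A, hA, hvA, hprop⟩ := hv v hvV
      refine ⟨A, fun _ => ⟨hA, hvA, fun D hD hDA => ?_⟩⟩
      by_cases hvD : v ∈ D
      · exact hprop D hD hvD hDA
      · have hE : G.ClopenIn (A \ D) := hA.diff hD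
        have hvE : v ∈ A \ D := ⟨hvA, hvD⟩
        have hPA : G.EvenCut A (G.V \ A) := hprop A hA hvA subset_rfl
        have hPE : G.EvenCut (A \ D) (G.V \ (A \ D)) := hprop _ hE hvE diff_subset
        have hunion : D ∪ (A \ D) = A := union_diff_cancel hDA
        have hdisj : D ∩ (A \ D) = ∅ := by
          ext y; simp only [Set.mem_inter_iff, Set.mem_diff, Set.mem_empty_iff_false,
            iff_false, not_and]
          tauto
        have hPU : G.EvenCut (D ∪ (A \ D)) (G.V \ (D ∪ (A \ D))) := by
          rw [hunion]; exact hPA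
        exact EvenCut.of_union hD.1 hE.1 hdisj hPU hPE
    · exact ⟨∅, fun h => absurd h hvV⟩
  choose N hN using shrink
  have main : ∀ (s : Finset X), (∀ v ∈ s, v ∈ G.V) →
      ∀ C, G.ClopenIn C → (C ⊆ ⋃ v ∈ s, N v) → G.EvenCut C (G.V \ C) := by
    intro s
    induction s using Finset.induction_on with
    | empty =>
      intro _ C hC hcov
      have hCe : C = ∅ := by
        apply eq_empty_of_subset_empty
        simpa using hcov
      have hcute : G.cut C (G.V \ C) = ∅ := by
        ext e
        simp [GraphLike.cut, hCe]
      constructor <;> rw [hcute] <;> simp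
    | @insert a s hnotmem ih =>
      intro hmem C hC hcov
      have haV : a ∈ G.V := hmem a (Finset.mem_insert_self a s)
      have hNa := hN a haV
      have hC₁ : G.ClopenIn (C ∩ N a) := hC.inter hNa.1
      have hC₂ : G.ClopenIn (C \ N a) := hC.diff hNa.1
      have hcov₂ : C \ N a ⊆ ⋃ v ∈ s, N v := by
        rintro w ⟨hwC, hwN⟩
        have hw := hcov hwC
        simp only [Finset.mem_insert, Set.mem_iUnion, exists_prop] at hw ⊢
        obtain ⟨v, hv, hwv⟩ := hw
        rcases hv with rfl | hv
        · exact absurd hwv hwN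
        · exact ⟨v, hv, hwv⟩
      have h₁ : G.EvenCut (C ∩ N a) (G.V \ (C ∩ N a)) :=
        hNa.2.2 _ hC₁ inter_subset_right
      have h₂ : G.EvenCut (C \ N a) (G.V \ (C \ N a)) :=
        ih (fun v hvs => hmem v (Finset.mem_insert_of_mem hvs)) _ hC₂ hcov₂
      have hu : (C ∩ N a) ∪ (C \ N a) = C := inter_union_diff C (N a)
      have hdisj : (C ∩ N a) ∩ (C \ N a) = ∅ := by
        ext y; simp only [Set.mem_inter_iff, Set.mem_diff, Set.mem_empty_iff_false,
          iff_false, not_and]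
        tauto
      have := EvenCut.union' hC₁.1 hC₂.1 hdisj h₁ h₂
      rwa [hu] at this
  intro C hC
  have hCcomp : IsCompact C := hC.2.1.isCompact
  have hcover : C ⊆ ⋃ v ∈ C, (G.V \ N v)ᶜ := by
    intro w hw
    have hwN : w ∈ N w := (hN w (hC.1 hw)).2.1
    refine mem_biUnion hw ?_
    simp only [Set.mem_compl_iff, Set.mem_diff, not_and, not_not]
    exact fun _ => hwN
  obtain ⟨T, hTsub, hTfin, hTcover⟩ := hCcomp.elim_finite_subcover_image
    (fun v hvC => ((hN v (hC.1 hvC)).1.2.2).isOpen_compl) hcover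
  have hcov2 : C ⊆ ⋃ v ∈ hTfin.toFinset, N v := by
    intro w hw
    have hw2 := hTcover hw
    simp only [Set.mem_iUnion, exists_prop] at hw2
    obtain ⟨v, hvT, hwv⟩ := hw2
    simp only [Set.mem_compl_iff, Set.mem_diff, not_and, not_not] at hwv
    have hwN : w ∈ N v := hwv (hC.1 hw)
    simp only [Set.mem_iUnion, exists_prop]
    exact ⟨v, hTfin.mem_toFinset.mpr hvT, hwN⟩
  exact main hTfin.toFinset (fun v hvs => hC.1 (hTsub (hTfin.mem_toFinset.mp hvs))) C hC hcov2

end GraphLike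

/-- In a graph-like continuum, every cut is even iff every vertex
is even. -/
theorem allCutsEven_iff_allVerticesEven
    [CompactSpace X] [TopologicalSpace.MetrizableSpace X] [ConnectedSpace X]
    (G : GraphLike X) :
    (∀ S : G.Separation, G.EvenCut S.A S.B) ↔ ∀ v ∈ G.V, G.EvenVertex v := by
  constructor
  · intro h v hvV
    refine ⟨G.V, G.clopenIn_V, hvV, fun C hC hvC hCV => ?_⟩
    have hclB : G.ClopenIn (G.V \ C) := by
      refine ⟨diff_subset, hC.2.2, ?_⟩
      rw [Set.diff_diff_cancel_left hC.1]
      exact hC.2.1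
    have hdisj : C ∩ (G.V \ C) = ∅ := by
      ext y; simp only [Set.mem_inter_iff, Set.mem_diff, Set.mem_empty_iff_false,
        iff_false, not_and]
      tauto
    exact h ⟨C, G.V \ C, hC, hclB, hdisj, union_diff_cancel hC.1⟩
  · intro h S
    have hBA : S.B = G.V \ S.A := by
      apply subset_antisymm
      · intro y hy
        refine ⟨S.clopenB.1 hy, fun hyA => ?_⟩
        have hmem : y ∈ S.A ∩ S.B := ⟨hyA, hy⟩
        rw [S.disjoint] at hmem
        exact hmem
      · rintro y ⟨hyV, hyA⟩
        have hmem : y ∈ S.A ∪ S.B := S.union ▸ hyV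
        rcases hmem with hmem | hmem
        · exact absurd hmem hyA
        · exact hmem
    have : G.EvenCut S.A (G.V \ S.A) := G.evenCut_of_allVerticesEven h S.A S.clopenA
    rwa [hBA]
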